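/- Let n ≥ 3 and let R ∈ K(𝔤ₙ). Then the scalar part of R is anti-invariant under complex conjugation: π(R(x̄, ȳ)) = −π(R(x, y)) for all x, y ∈ ℂⁿ, where x̄ denotes componentwise complex conjugation. -/

import Mathlib

/-- The Lie algebra `𝔤ₙ` of `S¹·GL(n,ℝ) ⊂ GL(n,ℂ) ⊂ GL(2n,ℝ)`, realized as the set of
complex `n × n` matrices of the form `M + i t Iₙ` with `M` real and `t ∈ ℝ`. -/
def gLieAlg (n : ℕ) : Set (Matrix (Fin n) (Fin n) ℂ) :=
  {X | ∃ (M : Matrix (Fin n) (Fin n) ℝ) (t : ℝ),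
    X = M.map (fun a => (a : ℂ)) + ((t : ℂ) * Complex.I) • (1 : Matrix (Fin n) (Fin n) ℂ)}

/-- auxiliary: the `ℝ`-linear map extracting the imaginary part of a diagonal entry. -/
noncomputable def entryIm (n : ℕ) (i0 : Fin n) : Matrix (Fin n) (Fin n) ℂ →ₗ[ℝ] ℝ where
  toFun X := (X i0 i0).im
  map_add' := by intros; simp [Matrix.add_apply]
  map_smul' := by intros; simp [Matrix.smul_apply]

/-- auxiliary: componentwise complex conjugation as an `ℝ`-linear map. -/
def conjL (n : ℕ) : (Fin n → ℂ) →ₗ[ℝ] (Fin n → ℂ) where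
  toFun x := fun j => starRingEnd ℂ (x j)
  map_add' := by intros; funext j; simp
  map_smul' := by intros; funext j; simp [Complex.real_smul]

theorem curvature_scalar_part_anti_invariant (n : ℕ) (hn : 3 ≤ n)
    (R : (Fin n → ℂ) →ₗ[ℝ] (Fin n → ℂ) →ₗ[ℝ] Matrix (Fin n) (Fin n) ℂ)
    (halt : ∀ x y, R x y = - R y x)
    (hG : ∀ x y, R x y ∈ gLieAlg n)
    (hBianchi : ∀ x y z,
      (R x y).mulVec z + (R y z).mulVec x + (R z x).mulVec y = 0) :
    ∀ (x y : Fin n → ℂ) (M M' : Matrix (Fin n) (Fin n) ℝ) (t t' : ℝ),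
      R x y = M.map (fun a => (a : ℂ))
          + ((t : ℂ) * Complex.I) • (1 : Matrix (Fin n) (Fin n) ℂ) →
      R (fun j => starRingEnd ℂ (x j)) (fun j => starRingEnd ℂ (y j))
          = M'.map (fun a => (a : ℂ))
          + ((t' : ℂ) * Complex.I) • (1 : Matrix (Fin n) (Fin n) ℂ) →
      t' = -t := by
  have hnpos : 0 < n := by omega
  set i0 : Fin n := ⟨0, hnpos⟩ with hi0
  -- entries of elements of gLieAlg
  have hent : ∀ (M : Matrix (Fin n) (Fin n) ℝ) (t : ℝ) (j k : Fin n),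
      ((M.map (fun a => (a : ℂ))
        + ((t : ℂ) * Complex.I) • (1 : Matrix (Fin n) (Fin n) ℂ)) j k).im
      = if j = k then t else 0 := by
    intro M t j k
    by_cases h : j = k <;>
      simp [h, Matrix.add_apply, Matrix.map_apply, Matrix.smul_apply, Matrix.one_apply]
  have key : ∀ x y : Fin n → ℂ, ∃ t : ℝ, ∀ j k, ((R x y) j k).im = if j = k then t else 0 := by
    intro x y
    obtain ⟨M, t, h⟩ := hG x y
    exact ⟨t, fun j k => by rw [h]; exact hent M t j k⟩
  -- the scalar-part function
  set f : (Fin n → ℂ) → (Fin n → ℂ) → ℝ := fun x y => ((R x y) i0 i0).im with hfdef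
  have hf_diag : ∀ x y (j : Fin n), ((R x y) j j).im = f x y := by
    intro x y j
    obtain ⟨t, ht⟩ := key x y
    rw [ht j j, hfdef]; simp [ht i0 i0]
  have hf_off : ∀ x y (j k : Fin n), j ≠ k → ((R x y) j k).im = 0 := by
    intro x y j k hjk
    obtain ⟨t, ht⟩ := key x y
    rw [ht j k, if_neg hjk]
  -- existence of a third index
  have hex : ∀ j k : Fin n, ∃ l : Fin n, l ≠ j ∧ l ≠ k := by
    intro j k
    by_contra h
    push_neg at h
    have hsub : (Finset.univ : Finset (Fin n)) ⊆ {j, k} := by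
      intro l _
      rcases eq_or_ne l j with rfl | hlj
      · simp
      · simp [h l hlj]
    have hcard := Finset.card_le_card hsub
    have h2 : ({j, k} : Finset (Fin n)).card ≤ 2 := by
      apply le_trans (Finset.card_insert_le _ _); simp
    simp [Finset.card_univ] at hcard
    omega
  -- R x x = 0
  have hRxx : ∀ x, R x x = 0 := by
    intro x
    have h := halt x x
    have h2 : R x x + R x x = 0 := by nth_rewrite 1 [h]; simp
    have h3 : (2 : ℝ) • R x x = 0 := by rw [two_smul]; exact h2
    simpa using (smul_eq_zero.mp h3).resolve_left (by norm_num)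
  -- Lemma A : vanishing on pairs of real basis vectors
  have hA : ∀ j k : Fin n, f (Pi.single j (1:ℂ)) (Pi.single k (1:ℂ)) = 0 := by
    intro j k
    rcases eq_or_ne j k with rfl | hjk
    · rw [hfdef]; simp [hRxx]
    · obtain ⟨l, hlj, hlk⟩ := hex j k
      have hb := congrFun (hBianchi (Pi.single j (1:ℂ)) (Pi.single k 1) (Pi.single l 1)) l
      simp only [Matrix.mulVec_single, Pi.smul_apply, op_smul_eq_mul, Matrix.col_apply,
        Pi.add_apply, Pi.zero_apply, mul_one] at hb
      have him := congrArg Complex.im hb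
      simp only [Complex.add_im, Complex.zero_im] at him
      rw [hf_diag, hf_off _ _ _ _ hlj, hf_off _ _ _ _ hlk] at him
      linarith
  -- Lemma B : vanishing on pairs of imaginary basis vectors
  have hB : ∀ j k : Fin n, f (Pi.single j Complex.I) (Pi.single k Complex.I) = 0 := by
    intro j k
    rcases eq_or_ne j k with rfl | hjk
    · rw [hfdef]; simp [hRxx]
    · obtain ⟨l, hlj, hlk⟩ := hex j k
      have hb := congrFun
        (hBianchi (Pi.single j Complex.I) (Pi.single k Complex.I) (Pi.single l Complex.I)) l
      simp only [Matrix.mulVec_single, Pi.smul_apply, op_smul_eq_mul, Matrix.col_apply,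
        Pi.add_apply, Pi.zero_apply] at hb
      have hre := congrArg Complex.re hb
      simp only [Complex.add_re, Complex.zero_re, Complex.mul_re,
        Complex.I_re, Complex.I_im, mul_zero, mul_one, zero_sub] at hre
      rw [hf_diag, hf_off _ _ _ _ hlj, hf_off _ _ _ _ hlk] at hre
      linarith
  -- bilinear-map formulation
  set F : (Fin n → ℂ) →ₗ[ℝ] (Fin n → ℂ) →ₗ[ℝ] ℝ := R.compr₂ (entryIm n i0) with hFdef
  have hFval : ∀ x y, F x y = f x y := fun x y => rfl
  have hfn1 : ∀ x y, f (-x) y = -f x y := by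
    intro x y; rw [hfdef]; simp only [map_neg, LinearMap.neg_apply, Matrix.neg_apply,
      Complex.neg_im]
  have hfn2 : ∀ x y, f x (-y) = -f x y := by
    intro x y; rw [hfdef]; simp only [map_neg, Matrix.neg_apply, Complex.neg_im]
  have hconj_single : ∀ (j : Fin n) (c : ℂ),
      conjL n (Pi.single j c) = Pi.single j ((starRingEnd ℂ) c) := by
    intro j c
    funext m
    simp only [conjL, LinearMap.coe_mk, AddHom.coe_mk, Pi.single_apply,
      apply_ite (starRingEnd ℂ), map_zero]
  have hFC : (F.compl₁₂ (conjL n) (conjL n)) = -F := by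
    apply (Pi.basis fun _ : Fin n => Complex.basisOneI).ext
    rintro ⟨j, i⟩
    apply (Pi.basis fun _ : Fin n => Complex.basisOneI).ext
    rintro ⟨k, i'⟩
    simp only [LinearMap.compl₁₂_apply, LinearMap.neg_apply, Pi.basis_apply]
    have hsingle_neg : ∀ (j : Fin n),
        (Pi.single j (-Complex.I) : Fin n → ℂ) = -(Pi.single j Complex.I) := by
      intro j; simp [Pi.single_neg]
    fin_cases i <;> fin_cases i' <;>
      simp only [Fin.mk_zero, Fin.mk_one, Fin.isValue, Complex.coe_basisOneI,
        Matrix.cons_val_zero, Matrix.cons_val_one, Matrix.head_cons, hconj_single,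
        Complex.conj_I, map_one, hsingle_neg, hFval] <;>
      simp [hA, hB, hfn1, hfn2]
  intro x y M M' t t' h1 h2
  have ht : f x y = t := by
    rw [hfdef]; simp only; rw [h1, hent]; simp
  have ht' : f (fun j => starRingEnd ℂ (x j)) (fun j => starRingEnd ℂ (y j)) = t' := by
    rw [hfdef]; simp only; rw [h2, hent]; simp
  have hmain : F (conjL n x) (conjL n y) = -(F x y) := by
    have := congrFun (congrArg (fun G => fun a b => G a b) hFC) x
    have h5 : (F.compl₁₂ (conjL n) (conjL n)) x y = (-F) x y := by rw [hFC]
    simpa using h5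
  rw [hFval, hFval] at hmain
  have hcx : conjL n x = (fun j => starRingEnd ℂ (x j)) := rfl
  have hcy : conjL n y = (fun j => starRingEnd ℂ (y j)) := rfl
  rw [hcx, hcy, ht, ht'] at hmain
  exact hmain
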